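/- Let γ ∈ L¹₊(0,∞) with ∫₀^∞ γ(a)da = 1, and let ρ > 1. There is no continuous function ξ: ℝ≥0 → ℝ with ξ(t) > 0 for all t ≥ 0, ξ(t) → 0 as t → ∞, and ξ(t) ≥ ρ ∫₀^{min(t,a*)} γ(a) ξ(t-a) da for all t sufficiently large, where a* ∈ (0,∞] and γ vanishes on (a*,∞). -/

import Mathlib

open MeasureTheory Real Set Filter
open scoped ENNReal

/-- no positive continuous function vanishing at infinity can eventually
dominate `ρ` times its own convolution with a probability kernel `γ`, when `ρ > 1`. -/
theorem no_positive_vanishing_subsolution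
    (γ : ℝ → ℝ) (hγmeas : Measurable γ) (hγpos : ∀ a, 0 ≤ γ a)
    (hγint : IntegrableOn γ (Ioi (0:ℝ)))
    (hγnorm : ∫ a in Ioi (0:ℝ), γ a = 1)
    (astar : ℝ≥0∞) (hastar : 0 < astar)
    (hγsupp : ∀ a : ℝ, astar < ENNReal.ofReal a → γ a = 0)
    (ρ : ℝ) (hρ : 1 < ρ) :
    ¬ ∃ ξ : ℝ → ℝ, Continuous ξ ∧ (∀ t : ℝ, 0 ≤ t → 0 < ξ t) ∧
      Tendsto ξ atTop (nhds 0) ∧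
      (∀ᶠ t in atTop,
        ρ * ∫ a in (0:ℝ)..(min (ENNReal.ofReal t) astar).toReal, γ a * ξ (t - a) ≤ ξ t) := by
  -- First, find `B > 0` with `ENNReal.ofReal B ≤ astar` and `∫ a in 0..B, γ a > 1/ρ`.
  have hρ0 : (0:ℝ) < ρ := lt_trans one_pos hρ
  obtain ⟨B, hBastar, hBint⟩ :
      ∃ B : ℝ, ENNReal.ofReal B ≤ astar ∧ 1/ρ < ∫ a in (0:ℝ)..B, γ a := by
    rcases eq_or_ne astar ⊤ with htop | htop
    · have h1 : Tendsto (fun b => ∫ a in (0:ℝ)..b, γ a) atTop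
          (nhds (∫ a in Ioi (0:ℝ), γ a)) :=
        intervalIntegral_tendsto_integral_Ioi 0 hγint tendsto_id
      rw [hγnorm] at h1
      have hlt : 1/ρ < 1 := by
        rw [div_lt_one hρ0]; exact hρ
      obtain ⟨B, hB⟩ := (h1.eventually_const_lt hlt).exists
      exact ⟨B, htop ▸ le_top, hB⟩
    · set A := astar.toReal with hA
      have hA0 : 0 < A := ENNReal.toReal_pos hastar.ne' htop
      refine ⟨A, by rw [ENNReal.ofReal_toReal htop], ?_⟩
      have hsplit : (∫ a in Ioc (0:ℝ) A, γ a) + ∫ a in Ioi A, γ a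
          = ∫ a in Ioi (0:ℝ), γ a := by
        rw [← MeasureTheory.setIntegral_union (Set.Ioc_disjoint_Ioi le_rfl)
          measurableSet_Ioi (hγint.mono_set Ioc_subset_Ioi_self)
          (hγint.mono_set (Ioi_subset_Ioi hA0.le)), Set.Ioc_union_Ioi_eq_Ioi hA0.le]
      have hzero : (∫ a in Ioi A, γ a) = 0 := by
        apply MeasureTheory.setIntegral_eq_zero_of_forall_eq_zero
        intro x hx
        exact hγsupp x (by
          rw [← ENNReal.ofReal_toReal htop]
          exact (ENNReal.ofReal_lt_ofReal_iff_of_nonneg hA0.le).2 hx)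
      rw [intervalIntegral.integral_of_le hA0.le]
      have : (∫ a in Ioc (0:ℝ) A, γ a) = 1 := by
        rw [← hγnorm, ← hsplit, hzero, add_zero]
      rw [this, div_lt_one hρ0]; exact hρ
  have hB0 : 0 < B := by
    by_contra h
    push_neg at h
    rw [intervalIntegral.integral_of_ge h] at hBint
    have : (0:ℝ) ≤ ∫ a in Ioc B (0:ℝ), γ a :=
      MeasureTheory.setIntegral_nonneg measurableSet_Ioc fun x _ => hγpos x
    have h1ρ : (0:ℝ) < 1/ρ := by positivity
    linarith
  rintro ⟨ξ, hξc, hξpos, hξ0, hineq⟩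
  obtain ⟨t₀, ht₀⟩ := eventually_atTop.1 hineq
  set t₁ : ℝ := max t₀ B with ht₁
  have ht₁B : B ≤ t₁ := le_max_right _ _
  have ht₁0 : 0 ≤ t₁ - B := by linarith
  -- minimum of ξ on [t₁ - B, t₁]
  obtain ⟨x₀, hx₀mem, hx₀min⟩ := isCompact_Icc.exists_isMinOn
    (Set.nonempty_Icc.2 (by linarith : t₁ - B ≤ t₁)) hξc.continuousOn
  set m : ℝ := ξ x₀ with hm
  have hm0 : 0 < m := hξpos x₀ (le_trans ht₁0 hx₀mem.1)
  -- choose T ≥ t₁ with ξ T < m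
  obtain ⟨T, hTm, hTt₁⟩ := ((hξ0.eventually_lt_const hm0).and (eventually_ge_atTop t₁)).exists
  -- minimizer on [t₁ - B, T]
  have hT' : t₁ - B ≤ T := by linarith [hTt₁]
  obtain ⟨s, hsmem, hsmin⟩ := isCompact_Icc.exists_isMinOn
    (Set.nonempty_Icc.2 hT') hξc.continuousOn
  have hsT : ξ s < m := lt_of_le_of_lt (hsmin ⟨hT', le_refl T⟩) hTm
  have hst₁ : t₁ < s := by
    by_contra h
    push_neg at h
    exact absurd (hx₀min ⟨hsmem.1, h⟩) (not_le.2 hsT)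
  have hs0 : 0 < ξ s := hξpos s (by linarith)
  -- the recursive inequality at s
  have hkey := ht₀ s (le_trans (le_max_left _ _) hst₁.le)
  set c : ℝ := (min (ENNReal.ofReal s) astar).toReal with hc
  have hmin_ne : min (ENNReal.ofReal s) astar ≠ ⊤ :=
    ne_top_of_le_ne_top ENNReal.ofReal_ne_top (min_le_left _ _)
  have hBc : B ≤ c := by
    have h1 : ENNReal.ofReal B ≤ min (ENNReal.ofReal s) astar :=
      le_min (ENNReal.ofReal_le_ofReal (by linarith)) hBastar
    calc B = (ENNReal.ofReal B).toReal := (ENNReal.toReal_ofReal hB0.le).symm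
      _ ≤ c := ENNReal.toReal_mono hmin_ne h1
  have hcs : c ≤ s := by
    calc c ≤ (ENNReal.ofReal s).toReal :=
          ENNReal.toReal_mono ENNReal.ofReal_ne_top (min_le_left _ _)
      _ = s := ENNReal.toReal_ofReal (by linarith)
  have hc0 : 0 ≤ c := le_trans hB0.le hBc
  -- integrability of the integrand on [0, c]
  have hγii : IntervalIntegrable γ volume 0 c := by
    rw [intervalIntegrable_iff_integrableOn_Ioc_of_le hc0]
    exact hγint.mono_set Ioc_subset_Ioi_self
  have hii : IntervalIntegrable (fun a => γ a * ξ (s - a)) volume 0 c :=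
    hγii.mul_continuousOn ((hξc.comp (continuous_const.sub continuous_id)).continuousOn)
  have hiiB : IntervalIntegrable (fun a => γ a * ξ (s - a)) volume 0 B :=
    hii.mono_set (by
      rw [Set.uIcc_of_le hc0, Set.uIcc_of_le hB0.le]
      exact Set.Icc_subset_Icc le_rfl hBc)
  have hiiBc : IntervalIntegrable (fun a => γ a * ξ (s - a)) volume B c :=
    hii.mono_set (by
      rw [Set.uIcc_of_le hc0, Set.uIcc_of_le hBc]
      exact Set.Icc_subset_Icc hB0.le le_rfl)
  have hγiiB : IntervalIntegrable γ volume 0 B := by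
    rw [intervalIntegrable_iff_integrableOn_Ioc_of_le hB0.le]
    exact hγint.mono_set Ioc_subset_Ioi_self
  -- Step 1: restrict to [0, B]
  have hstep1 : (∫ a in (0:ℝ)..B, γ a * ξ (s - a)) ≤ ∫ a in (0:ℝ)..c, γ a * ξ (s - a) := by
    rw [← intervalIntegral.integral_add_adjacent_intervals hiiB hiiBc]
    have : (0:ℝ) ≤ ∫ a in B..c, γ a * ξ (s - a) := by
      apply intervalIntegral.integral_nonneg hBc
      intro u hu
      exact mul_nonneg (hγpos u) (hξpos _ (by linarith [hu.2])).le
    linarith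
  -- Step 2: lower bound on [0, B] by minimality of s
  have hstep2 : (∫ a in (0:ℝ)..B, γ a) * ξ s ≤ ∫ a in (0:ℝ)..B, γ a * ξ (s - a) := by
    rw [← intervalIntegral.integral_mul_const]
    apply intervalIntegral.integral_mono_on hB0.le (hγiiB.mul_const _) hiiB
    intro a ha
    have hsa : s - a ∈ Icc (t₁ - B) T := ⟨by linarith [ha.2], by linarith [ha.1, hsmem.2]⟩
    exact mul_le_mul_of_nonneg_left (hsmin hsa) (hγpos a)
  -- Combine
  have hfinal : ξ s < ρ * ∫ a in (0:ℝ)..c, γ a * ξ (s - a) := by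
    calc ξ s = ρ * ((1/ρ) * ξ s) := by field_simp
      _ < ρ * ((∫ a in (0:ℝ)..B, γ a) * ξ s) := by
          apply mul_lt_mul_of_pos_left (mul_lt_mul_of_pos_right hBint hs0) hρ0
      _ ≤ ρ * ∫ a in (0:ℝ)..B, γ a * ξ (s - a) := by
          exact mul_le_mul_of_nonneg_left hstep2 hρ0.le
      _ ≤ ρ * ∫ a in (0:ℝ)..c, γ a * ξ (s - a) :=
          mul_le_mul_of_nonneg_left hstep1 hρ0.le
  exact absurd hkey (not_le.2 hfinal)
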